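/- limsup_{n→∞} |cos n|^(n²) ≥ exp(−π²/2), where n ranges over the positive integers. -/

import Mathlib

open Filter Real

lemma pi_good_approx (B : ℕ) :
    ∃ q : ℚ, |Real.pi - (q : ℝ)| < 1 / (q.den : ℝ) ^ 2 ∧ B < q.den := by
  have hS := Real.infinite_rat_abs_sub_lt_one_div_den_sq_of_irrational irrational_pi
  have hfin : {q : ℚ | |Real.pi - (q : ℝ)| < 1 / (q.den : ℝ) ^ 2 ∧ q.den ≤ B}.Finite := by
    apply Set.Finite.subset
      (Set.Finite.image (fun p : ℤ × ℕ => (p.1 : ℚ) / (p.2 : ℚ))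
        ((Set.finite_Icc (-(5 * (B : ℤ) + 5)) (5 * B + 5)).prod (Set.finite_Iic B)))
    rintro q ⟨hq, hden⟩
    have hd1 : (1 : ℝ) ≤ (q.den : ℝ) := by exact_mod_cast q.pos
    have h2 : |Real.pi - (q : ℝ)| < 1 := by
      refine hq.trans_le ?_
      rw [div_le_one (by positivity)]
      nlinarith
    have h3 : |(q : ℝ)| ≤ Real.pi + 1 := by
      have := abs_sub_abs_le_abs_sub (q : ℝ) Real.pi
      rw [abs_sub_comm] at this
      have hpi : |Real.pi| = Real.pi := abs_of_pos Real.pi_pos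
      linarith
    have hnum : |(q.num : ℝ)| ≤ 5 * (q.den : ℝ) := by
      have hcast : (q.num : ℝ) = (q : ℝ) * (q.den : ℝ) := by
        rw [Rat.cast_def]
        field_simp
      rw [hcast, abs_mul, abs_of_nonneg (by positivity : (0:ℝ) ≤ (q.den : ℝ))]
      have := Real.pi_le_four
      nlinarith
    have hnum' : |q.num| ≤ 5 * (B : ℤ) + 5 := by
      have hdB : (q.den : ℝ) ≤ (B : ℝ) := by exact_mod_cast hden
      have : |(q.num : ℝ)| ≤ 5 * (B : ℝ) + 5 := by linarith
      rw [← Int.cast_abs] at this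
      exact_mod_cast this
    refine ⟨(q.num, q.den), ⟨?_, hden⟩, ?_⟩
    · simp only [Set.mem_Icc]
      constructor <;> [linarith [neg_abs_le q.num]; linarith [le_abs_self q.num]]
    · exact q.num_div_den
  obtain ⟨q, hq⟩ := (hS.diff hfin).nonempty
  exact ⟨q, hq.1, lt_of_not_ge fun h => hq.2 ⟨hq.1, h⟩⟩

lemma pi_sq_lt_ten : Real.pi ^ 2 < 10 := by
  nlinarith [Real.pi_lt_d2, Real.pi_gt_three]

set_option maxHeartbeats 1600000 in
lemma freq_step {c' : ℝ} (h0 : 0 < c') (hc' : c' < Real.exp (-Real.pi ^ 2 / 2)) :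
    ∃ᶠ n : ℕ in atTop, c' ≤ |Real.cos n| ^ ((n : ℝ) ^ 2) := by
  set η : ℝ := -(Real.pi ^ 2 / 2) - Real.log c' with hηdef
  clear_value η
  have hlog : Real.log c' < -(Real.pi ^ 2 / 2) := by
    have := Real.log_lt_log h0 hc'
    rw [Real.log_exp] at this
    linarith
  have hη : 0 < η := by simp only [hηdef]; linarith
  rw [frequently_atTop]
  intro N
  obtain ⟨q, hq, hden⟩ := pi_good_approx (max N ⌈34 / η⌉₊)
  set d : ℝ := (q.den : ℝ) with hddef
  clear_value d
  have hd1 : (1 : ℝ) ≤ d := hddef ▸ Nat.one_le_cast.mpr q.pos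
  have hdpos : (0 : ℝ) < d := lt_of_lt_of_le one_pos hd1
  have hqpos : (0 : ℝ) < (q : ℝ) := by
    have h1 : |Real.pi - (q : ℝ)| < 1 := by
      refine hq.trans_le ?_
      rw [div_le_one (by positivity)]
      nlinarith
    have := (abs_lt.mp h1).2
    have := Real.pi_gt_three
    linarith
  set n : ℕ := q.num.toNat with hndef
  clear_value n
  have hn : ((n : ℕ) : ℝ) = (q : ℝ) * d := by
    have h1 : ((n : ℕ) : ℤ) = q.num := by
      rw [hndef]; exact Int.toNat_of_nonneg (Rat.num_pos.mpr (by exact_mod_cast hqpos)).le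
    have h2 : (q.num : ℝ) = (q : ℝ) * d := by
      rw [hddef, Rat.cast_def]; field_simp
    rw [← h2, ← h1]
    push_cast
    ring
  set δ : ℝ := (n : ℝ) - d * Real.pi with hδdef
  clear_value δ
  have hδ : |δ| < 1 / d := by
    have : δ = d * ((q : ℝ) - Real.pi) := by rw [hδdef, hn]; ring
    rw [this, abs_mul, abs_of_pos hdpos, abs_sub_comm]
    calc d * |Real.pi - (q : ℝ)| < d * (1 / d ^ 2) := by
          exact mul_lt_mul_of_pos_left hq hdpos
      _ = 1 / d := by field_simp
  have hδsq : δ ^ 2 < 1 / d ^ 2 := by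
    have h1 := abs_lt.mp hδ
    have h2 : (1 / d) ^ 2 = 1 / d ^ 2 := by ring
    nlinarith [mul_pos (by linarith [h1.1, h1.2] : (0:ℝ) < 1 / d - δ)
      (by linarith [h1.1, h1.2] : (0:ℝ) < 1 / d + δ)]
  have hcos : |Real.cos (n : ℝ)| = |Real.cos δ| := by
    have : (n : ℝ) = δ + (q.den : ℕ) * Real.pi := by rw [hδdef]; push_cast [← hddef]; ring
    rw [this, Real.cos_add_nat_mul_pi, abs_mul, abs_pow, abs_neg, abs_one, one_pow, one_mul]
  have hcosδ : 1 - 1 / (2 * d ^ 2) ≤ |Real.cos δ| := by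
    refine le_trans ?_ (le_abs_self _)
    have := Real.one_sub_sq_div_two_le_cos (x := δ)
    have hd2 : 1 / (2 * d ^ 2) = (1 / d ^ 2) / 2 := by ring
    linarith
  have ht : (0 : ℝ) < 2 * d ^ 2 - 1 := by nlinarith
  have step1 : Real.exp (-(1 / (2 * d ^ 2 - 1))) ≤ 1 - 1 / (2 * d ^ 2) := by
    have h1 := Real.add_one_le_exp (1 / (2 * d ^ 2 - 1))
    have h2 : (0 : ℝ) < 1 / (2 * d ^ 2 - 1) + 1 := by positivity
    rw [Real.exp_neg, ← one_div]
    have h3 : 1 / Real.exp (1 / (2 * d ^ 2 - 1)) ≤ 1 / (1 / (2 * d ^ 2 - 1) + 1) :=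
      one_div_le_one_div_of_le h2 (by linarith)
    refine h3.trans (le_of_eq ?_)
    field_simp
    ring
  have hnle : (n : ℝ) ≤ d * Real.pi + 1 / d := by
    have := (abs_lt.mp hδ).2
    rw [hδdef] at this
    linarith
  have hnn : (0 : ℝ) ≤ (n : ℝ) := Nat.cast_nonneg n
  have hexp2 : (1 / (2 * d ^ 2 - 1)) * (n : ℝ) ^ 2 ≤ Real.pi ^ 2 / 2 + 34 / d ^ 2 := by
    rw [one_div, inv_mul_eq_div, div_le_iff₀ ht]
    have hsq : (d * Real.pi + 1 / d) ^ 2 = Real.pi ^ 2 * d ^ 2 + 2 * Real.pi + 1 / d ^ 2 := by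
      field_simp; ring
    have hq2 : (n : ℝ) ^ 2 ≤ Real.pi ^ 2 * d ^ 2 + 2 * Real.pi + 1 / d ^ 2 :=
      (pow_le_pow_left₀ hnn hnle 2).trans_eq hsq
    have hrhs : (Real.pi ^ 2 / 2 + 34 / d ^ 2) * (2 * d ^ 2 - 1)
        = Real.pi ^ 2 * d ^ 2 - Real.pi ^ 2 / 2 + 68 - 34 / d ^ 2 := by
      field_simp; ring
    have hπ1 := Real.pi_gt_three
    have hπ2 := Real.pi_lt_d2
    have hπsq : Real.pi ^ 2 < 10 := pi_sq_lt_ten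
    have hu2 : 1 / d ^ 2 ≤ 1 := by rw [div_le_one (by positivity)]; nlinarith
    have hu0 : 0 < 1 / d ^ 2 := by positivity
    rw [hrhs]
    have h34 : 34 / d ^ 2 = 34 * (1 / d ^ 2) := by ring
    rw [h34] at *
    linarith
  have h34η : 34 / d ^ 2 ≤ η := by
    have hceil : (34 / η : ℝ) ≤ (⌈34 / η⌉₊ : ℝ) := Nat.le_ceil _
    have hBd : ((⌈34 / η⌉₊ : ℕ) : ℝ) < d := by
      rw [hddef]
      exact_mod_cast lt_of_le_of_lt (le_max_right N _) hden
    have h1 : 34 / η < d := lt_of_le_of_lt hceil hBd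
    rw [div_le_iff₀ (by positivity)]
    have : 34 < η * d := by
      rw [div_lt_iff₀ hη] at h1; linarith [mul_comm η d]
    nlinarith
  have hchain : c' ≤ |Real.cos (n : ℝ)| ^ ((n : ℝ) ^ 2) := by
    have e1 : c' = Real.exp (-(Real.pi ^ 2 / 2 + η)) := by
      rw [show -(Real.pi ^ 2 / 2 + η) = Real.log c' by rw [hηdef]; ring, Real.exp_log h0]
    rw [e1]
    calc Real.exp (-(Real.pi ^ 2 / 2 + η))
        ≤ Real.exp (-((1 / (2 * d ^ 2 - 1)) * (n : ℝ) ^ 2)) := by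
          apply Real.exp_le_exp.mpr
          simp only [neg_le_neg_iff]
          linarith
      _ = Real.exp (-(1 / (2 * d ^ 2 - 1))) ^ ((n : ℝ) ^ 2) := by
          rw [← Real.exp_mul]; ring_nf
      _ ≤ (1 - 1 / (2 * d ^ 2)) ^ ((n : ℝ) ^ 2) :=
          Real.rpow_le_rpow (Real.exp_pos _).le step1 (sq_nonneg _)
      _ ≤ |Real.cos (n : ℝ)| ^ ((n : ℝ) ^ 2) := by
          apply Real.rpow_le_rpow ?_ ?_ (sq_nonneg _)
          · have h : 1 / (2 * d ^ 2) ≤ 1 := by rw [div_le_one (by positivity)]; nlinarith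
            linarith
          · rw [hcos]; exact hcosδ
  refine ⟨n, ?_, hchain⟩
  have hNd : ((N : ℕ) : ℝ) < d := by
    rw [hddef]
    exact_mod_cast lt_of_le_of_lt (le_max_left N _) hden
  have hnge : d ≤ (n : ℝ) := by
    have := (abs_lt.mp hδ).1
    rw [hδdef] at this
    have hπ1 := Real.pi_gt_three
    have h1d : 1 / d ≤ 1 := by rw [div_le_one hdpos]; exact hd1
    nlinarith
  exact_mod_cast (hNd.trans_le hnge).le

theorem limsup_cos_rpow_sq_ge :
    Real.exp (-Real.pi ^ 2 / 2) ≤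
      Filter.limsup (fun n : ℕ => |Real.cos n| ^ ((n : ℝ) ^ 2)) Filter.atTop := by
  have hbdd : IsBoundedUnder (· ≤ ·) atTop (fun n : ℕ => |Real.cos n| ^ ((n : ℝ) ^ 2)) :=
    isBoundedUnder_of ⟨1, fun n =>
      Real.rpow_le_one (abs_nonneg _) (Real.abs_cos_le_one _) (sq_nonneg _)⟩
  refine le_of_forall_lt fun c hc => ?_
  obtain ⟨c', hcc', hc'⟩ := exists_between hc
  refine lt_of_lt_of_le hcc' (le_limsup_of_frequently_le ?_ hbdd)
  rcases le_or_gt c' 0 with h0 | h0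
  · exact Eventually.frequently (Eventually.of_forall fun n =>
      h0.trans (Real.rpow_nonneg (abs_nonneg _) _))
  · exact freq_step h0 hc'
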